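/- Let H be a weakly τ-embedded subgroup of a finite group G and let U be a subgroup of G with H ≤ U. Then H is weakly τ-embedded in U. -/

import Mathlib

open scoped Pointwise

/-- `H` is S-quasinormal in `G` if it permutes with every Sylow subgroup of `G`. -/
def SQuasinormal (G : Type*) [Group G] (H : Subgroup G) : Prop :=
  ∀ (p : ℕ), p.Prime → ∀ P : Sylow p G,
    (H : Set G) * ((P : Subgroup G) : Set G) = ((P : Subgroup G) : Set G) * (H : Set G)

/-- `H` is τ-quasinormal in `G` if it permutes with every Sylow `q`-subgroup `Q` of `G`
such that `q ∤ |H|` and `gcd(|H|, |Q^G|) ≠ 1`. -/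
def TauQuasinormal (G : Type*) [Group G] (H : Subgroup G) : Prop :=
  ∀ (q : ℕ), q.Prime → ∀ Q : Sylow q G,
    ¬ q ∣ Nat.card H →
    Nat.gcd (Nat.card H) (Nat.card (Subgroup.normalClosure ((Q : Subgroup G) : Set G))) ≠ 1 →
    (H : Set G) * ((Q : Subgroup G) : Set G) = ((Q : Subgroup G) : Set G) * (H : Set G)

/-- `H_{τG}`: the subgroup generated by all subgroups of `H` that are τ-quasinormal in `G`. -/
def tauCore (G : Type*) [Group G] (H : Subgroup G) : Subgroup G :=
  ⨆ (L : Subgroup G) (_ : L ≤ H) (_ : TauQuasinormal G L), L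

/-- `H` is weakly τ-embedded in `G` if there is a normal subgroup `K` with `HK`
S-quasinormal in `G` and `H ∩ K ≤ H_{τG}`. (Since `K` is normal, `HK = H ⊔ K`.) -/
def WeaklyTauEmbedded (G : Type*) [Group G] (H : Subgroup G) : Prop :=
  ∃ K : Subgroup G, K.Normal ∧ SQuasinormal G (H ⊔ K) ∧ H ⊓ K ≤ tauCore G H


section Aux
open Subgroup
variable {G : Type*} [Group G]


/-- Dedekind-type set identity: for `H ≤ U`, `(H·S) ∩ U = H·(S ∩ U)`. -/
lemma aux_ded_left {H U : Subgroup G} (hHU : H ≤ U) (S : Set G) :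
    ((H : Set G) * S) ∩ (U : Set G) = (H : Set G) * (S ∩ (U : Set G)) := by
  ext x
  constructor
  · rintro ⟨⟨h, hh, s, hs, rfl⟩, hxU⟩
    exact ⟨h, hh, s, ⟨hs, by simpa using U.mul_mem (U.inv_mem (hHU hh)) hxU⟩, rfl⟩
  · rintro ⟨h, hh, s, ⟨hs, hsU⟩, rfl⟩
    exact ⟨⟨h, hh, s, hs, rfl⟩, U.mul_mem (hHU hh) hsU⟩

lemma aux_ded_right {H U : Subgroup G} (hHU : H ≤ U) (S : Set G) :
    (S * (H : Set G)) ∩ (U : Set G) = (S ∩ (U : Set G)) * (H : Set G) := by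
  ext x
  constructor
  · rintro ⟨⟨s, hs, h, hh, rfl⟩, hxU⟩
    exact ⟨s, ⟨hs, by simpa using U.mul_mem hxU (U.inv_mem (hHU hh))⟩, h, hh, rfl⟩
  · rintro ⟨s, ⟨hs, hsU⟩, h, hh, rfl⟩
    exact ⟨⟨s, hs, h, hh, rfl⟩, U.mul_mem hsU (hHU hh)⟩

/-- Every Sylow subgroup of `U` is the intersection with `U` of a Sylow subgroup of `G`. -/
lemma aux_exists_sylow_inf {p : ℕ} (hp : p.Prime) (U : Subgroup G) (Q : Sylow p U) :
    ∃ P : Sylow p G, (Q : Subgroup U).map U.subtype = (P : Subgroup G) ⊓ U := by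
  obtain ⟨P, hQP⟩ := (Q.2.map U.subtype).exists_le_sylow
  refine ⟨P, le_antisymm (le_inf hQP (map_subtype_le _)) ?_⟩
  have h1 : IsPGroup p (((P : Subgroup G) ⊓ U).subgroupOf U) :=
    (P.2.to_inf_left).comap_of_injective U.subtype U.subtype_injective
  have hQle : (Q : Subgroup U) ≤ ((P : Subgroup G) ⊓ U).subgroupOf U := by
    intro q hq
    exact mem_subgroupOf.mpr ⟨hQP (mem_map_of_mem U.subtype hq), q.2⟩
  have h2 := Q.3 h1 hQle
  have h3 : ((P : Subgroup G) ⊓ U) = (Q : Subgroup U).map U.subtype := by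
    rw [← h2, subgroupOf_map_subtype, inf_assoc, inf_idem]
  exact h3.le

lemma aux_tau_transfer [Finite G] {L U : Subgroup G} (hLU : L ≤ U)
    (h : TauQuasinormal G L) : TauQuasinormal U (L.subgroupOf U) := by
  intro q hq Q hcard hgcd
  obtain ⟨P, hPQ⟩ := aux_exists_sylow_inf hq U Q
  have hcardL : Nat.card (L.subgroupOf U) = Nat.card L :=
    Nat.card_congr (subgroupOfEquivOfLe hLU).toEquiv
  rw [hcardL] at hcard hgcd
  -- normal closure comparison
  haveI : (Subgroup.normalClosure ((P : Subgroup G) : Set G)).Normal :=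
    Subgroup.normalClosure_normal
  haveI : ((Subgroup.normalClosure ((P : Subgroup G) : Set G)).subgroupOf U).Normal :=
    Subgroup.Normal.subgroupOf inferInstance U
  have hncl : Subgroup.normalClosure ((Q : Subgroup U) : Set U) ≤
      (Subgroup.normalClosure ((P : Subgroup G) : Set G)).subgroupOf U := by
    apply Subgroup.normalClosure_le_normal
    intro x hx
    have hxP : (x : G) ∈ (P : Subgroup G) ⊓ U := hPQ ▸ mem_map_of_mem U.subtype hx
    exact mem_subgroupOf.mpr (Subgroup.subset_normalClosure hxP.1)
  have hdvd : Nat.card (Subgroup.normalClosure ((Q : Subgroup U) : Set U)) ∣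
      Nat.card (Subgroup.normalClosure ((P : Subgroup G) : Set G)) := by
    refine (Subgroup.card_dvd_of_le hncl).trans ?_
    have e : ((Subgroup.normalClosure ((P : Subgroup G) : Set G)).subgroupOf U).map U.subtype
        = Subgroup.normalClosure ((P : Subgroup G) : Set G) ⊓ U := subgroupOf_map_subtype _ _
    have : Nat.card ((Subgroup.normalClosure ((P : Subgroup G) : Set G)).subgroupOf U)
        = Nat.card (Subgroup.normalClosure ((P : Subgroup G) : Set G) ⊓ U : Subgroup G) := by
      rw [← e]
      exact Nat.card_congr (Subgroup.equivMapOfInjective _ _ U.subtype_injective).toEquiv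
    rw [this]
    exact Subgroup.card_dvd_of_le inf_le_left
  have hgcd' : Nat.gcd (Nat.card L)
      (Nat.card (Subgroup.normalClosure ((P : Subgroup G) : Set G))) ≠ 1 := by
    intro h1
    apply hgcd
    have : Nat.gcd (Nat.card L) (Nat.card (Subgroup.normalClosure ((Q : Subgroup U) : Set U))) ∣
        Nat.gcd (Nat.card L) (Nat.card (Subgroup.normalClosure ((P : Subgroup G) : Set G))) :=
      Nat.dvd_gcd (Nat.gcd_dvd_left _ _) ((Nat.gcd_dvd_right _ _).trans hdvd)
    rw [h1] at this
    exact Nat.dvd_one.mp this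
  have hcomm := h q hq P hcard hgcd'
  -- transfer to U
  apply Set.image_injective.mpr U.subtype_injective
  rw [Set.image_mul, Set.image_mul, ← coe_map U.subtype, ← coe_map U.subtype, hPQ,
    subgroupOf_map_subtype, inf_eq_left.mpr hLU, coe_inf,
    ← aux_ded_left hLU, hcomm, aux_ded_right hLU]

lemma aux_hard1 [Finite G] {K U : Subgroup G} (hK : K.Normal) {p : ℕ} (hp : p.Prime)
    (Q : Sylow p U) (P : Sylow p G)
    (hPQ : (Q : Subgroup U).map U.subtype = (P : Subgroup G) ⊓ U) :
    K.subgroupOf U ⊔ (Q : Subgroup U) = ((K ⊔ (P : Subgroup G)) ⊓ U).subgroupOf U := by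
  haveI := Fact.mk hp
  haveI := hK
  set W : Subgroup U := ((K ⊔ (P : Subgroup G)) ⊓ U).subgroupOf U with hWdef
  have hKW : K.subgroupOf U ≤ W := by
    intro x hx
    exact mem_subgroupOf.mpr ⟨(le_sup_left : K ≤ K ⊔ (P : Subgroup G)) (mem_subgroupOf.mp hx), x.2⟩
  have hQW : (Q : Subgroup U) ≤ W := by
    intro x hx
    have hxP : (x : G) ∈ (P : Subgroup G) ⊓ U := hPQ ▸ mem_map_of_mem U.subtype hx
    exact mem_subgroupOf.mpr ⟨(le_sup_right : (P : Subgroup G) ≤ K ⊔ (P : Subgroup G)) hxP.1, x.2⟩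
  set T : Subgroup U := K.subgroupOf U ⊔ (Q : Subgroup U) with hTdef
  have hTW : T ≤ W := sup_le hKW hQW
  set φ : U →* G ⧸ K := (QuotientGroup.mk' K).comp U.subtype with hφdef
  -- the image of W under φ is a p-group
  have hle : W.map φ ≤ (P : Subgroup G).map (QuotientGroup.mk' K) := by
    rintro _ ⟨w, hw, rfl⟩
    have hw' : (w : G) ∈ K ⊔ (P : Subgroup G) := (mem_subgroupOf.mp hw).1
    have : (w : G) ∈ (K : Set G) * ((P : Subgroup G) : Set G) := by
      rw [← Subgroup.normal_mul]; exact hw'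
    obtain ⟨k, hk, x, hx, hkx⟩ := this
    refine ⟨x, hx, ?_⟩
    have hkx' : k * x = (w : G) := hkx
    have : φ w = QuotientGroup.mk' K (k * x) := by rw [hkx']; rfl
    rw [this, map_mul]
    have hk1 : QuotientGroup.mk' K k = 1 := (QuotientGroup.eq_one_iff _).mpr hk
    rw [hk1, one_mul]
  have hpg : IsPGroup p (W.map φ) := (P.2.map _).to_le hle
  -- relIndex of K.subgroupOf U in W is a power of p
  have hker2 : (φ.comp W.subtype).ker = (K.subgroupOf U).subgroupOf W := by
    ext x
    simp [MonoidHom.mem_ker, hφdef, mem_subgroupOf, QuotientGroup.eq_one_iff]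
  have hrange : (φ.comp W.subtype).range = W.map φ := by
    rw [MonoidHom.range_comp, range_subtype]
  obtain ⟨n, hn⟩ := hpg.exists_card_eq
  have hreleq : (K.subgroupOf U).relIndex W = p ^ n := by
    calc (K.subgroupOf U).relIndex W
        = Nat.card (W ⧸ (K.subgroupOf U).subgroupOf W) := rfl
      _ = Nat.card (W ⧸ (φ.comp W.subtype).ker) := by rw [hker2]
      _ = Nat.card (φ.comp W.subtype).range :=
          Nat.card_congr (QuotientGroup.quotientKerEquivRange _).toEquiv
      _ = p ^ n := by rw [hrange, hn]
  have hd1 : T.relIndex W ∣ p ^ n := by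
    rw [← hreleq]
    exact ⟨(K.subgroupOf U).relIndex T, by
      rw [mul_comm]
      exact (Subgroup.relIndex_mul_relIndex (K.subgroupOf U) T W le_sup_left hTW).symm⟩
  have hd2 : T.relIndex W ∣ ((Q : Subgroup U) : Subgroup U).index := by
    refine dvd_trans ?_ (Subgroup.relIndex_dvd_index_of_le hQW)
    exact ⟨(Q : Subgroup U).relIndex T, by
      rw [mul_comm]
      exact (Subgroup.relIndex_mul_relIndex (Q : Subgroup U) T W le_sup_right hTW).symm⟩
  have hnd : ¬ p ∣ ((Q : Subgroup U) : Subgroup U).index := Q.not_dvd_index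
  have h1 : T.relIndex W = 1 := by
    have hcop : Nat.Coprime (T.relIndex W) p :=
      ((Nat.Prime.coprime_iff_not_dvd hp).mpr (fun hdvd => hnd (hdvd.trans hd2))).symm
    exact (hcop.pow_right n).eq_one_of_dvd hd1
  exact le_antisymm hTW (Subgroup.relIndex_eq_one.mp h1)

lemma aux_tauCore_le [Finite G] {H U : Subgroup G} (hHU : H ≤ U) :
    tauCore G H ≤ (tauCore U (H.subgroupOf U)).map U.subtype := by
  refine iSup_le fun L => iSup_le fun hL => iSup_le fun hτ => ?_
  have hτ' : TauQuasinormal U (L.subgroupOf U) := aux_tau_transfer (hL.trans hHU) hτ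
  have hle : L.subgroupOf U ≤ H.subgroupOf U := Subgroup.comap_mono hL
  have h1 : L.subgroupOf U ≤ tauCore U (H.subgroupOf U) :=
    le_iSup_of_le (L.subgroupOf U) (le_iSup_of_le hle (le_iSup_of_le hτ' le_rfl))
  calc L = (L.subgroupOf U).map U.subtype := by
        rw [subgroupOf_map_subtype, inf_eq_left.mpr (hL.trans hHU)]
    _ ≤ _ := Subgroup.map_mono h1

end Aux

/-- If `H` is weakly τ-embedded in a finite group `G` and `H ≤ U ≤ G`, then `H` is
weakly τ-embedded in `U`. -/
theorem weaklyTauEmbedded_of_le {G : Type*} [Group G] [Finite G] (H U : Subgroup G)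
    (hHU : H ≤ U) (hH : WeaklyTauEmbedded G H) :
    WeaklyTauEmbedded U (H.subgroupOf U) := by
  classical
  obtain ⟨K, hKn, hSQ, hcore⟩ := hH
  haveI := hKn
  haveI hK1n : (K.subgroupOf U).Normal := hKn.subgroupOf U
  refine ⟨K.subgroupOf U, hK1n, ?_, ?_⟩
  · intro p hp Q
    obtain ⟨P, hPQ⟩ := aux_exists_sylow_inf hp U Q
    have hW := aux_hard1 hKn hp Q P hPQ
    set W : Subgroup U := ((K ⊔ (P : Subgroup G)) ⊓ U).subgroupOf U with hWdef
    -- the key commutation in `G`, intersected down to `U`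
    have key2 : (H : Set G) * ((K ⊔ (P : Subgroup G) : Subgroup G) : Set G)
        = ((K ⊔ (P : Subgroup G) : Subgroup G) : Set G) * (H : Set G) := by
      calc (H : Set G) * ((K ⊔ (P : Subgroup G) : Subgroup G) : Set G)
          = (H : Set G) * ((K : Set G) * ((P : Subgroup G) : Set G)) := by
            rw [Subgroup.normal_mul]
        _ = ((H : Set G) * (K : Set G)) * ((P : Subgroup G) : Set G) :=
            (mul_assoc _ _ _).symm
        _ = ((H ⊔ K : Subgroup G) : Set G) * ((P : Subgroup G) : Set G) := by
            rw [Subgroup.mul_normal]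
        _ = ((P : Subgroup G) : Set G) * ((H ⊔ K : Subgroup G) : Set G) := hSQ p hp P
        _ = ((P : Subgroup G) : Set G) * ((K : Set G) * (H : Set G)) := by
            rw [sup_comm H K, Subgroup.normal_mul]
        _ = (((P : Subgroup G) : Set G) * (K : Set G)) * (H : Set G) :=
            (mul_assoc _ _ _).symm
        _ = (((P : Subgroup G) ⊔ K : Subgroup G) : Set G) * (H : Set G) := by
            rw [Subgroup.mul_normal]
        _ = ((K ⊔ (P : Subgroup G) : Subgroup G) : Set G) * (H : Set G) := by
            rw [sup_comm]
    have key : ((H.subgroupOf U : Subgroup U) : Set U) * (W : Set U)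
        = (W : Set U) * ((H.subgroupOf U : Subgroup U) : Set U) := by
      apply Set.image_injective.mpr U.subtype_injective
      rw [Set.image_mul, Set.image_mul, ← Subgroup.coe_map, ← Subgroup.coe_map,
        hWdef, Subgroup.subgroupOf_map_subtype, Subgroup.subgroupOf_map_subtype,
        inf_eq_left.mpr hHU, inf_assoc, inf_idem, Subgroup.coe_inf,
        ← aux_ded_left hHU, key2, aux_ded_right hHU]
    have b : ((K.subgroupOf U : Subgroup U) : Set U) * ((Q : Subgroup U) : Set U)
        = (W : Set U) := by
      rw [← Subgroup.normal_mul, hW]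
    have c : ((Q : Subgroup U) : Set U) * ((K.subgroupOf U : Subgroup U) : Set U)
        = (W : Set U) := by
      rw [← Subgroup.mul_normal, sup_comm, hW]
    calc ((H.subgroupOf U ⊔ K.subgroupOf U : Subgroup U) : Set U) * ((Q : Subgroup U) : Set U)
        = ((H.subgroupOf U : Subgroup U) : Set U) * ((K.subgroupOf U : Subgroup U) : Set U)
            * ((Q : Subgroup U) : Set U) := by rw [Subgroup.mul_normal]
      _ = ((H.subgroupOf U : Subgroup U) : Set U) * (W : Set U) := by rw [mul_assoc, b]
      _ = (W : Set U) * ((H.subgroupOf U : Subgroup U) : Set U) := key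
      _ = ((Q : Subgroup U) : Set U) * ((K.subgroupOf U : Subgroup U) : Set U)
            * ((H.subgroupOf U : Subgroup U) : Set U) := by rw [c]
      _ = ((Q : Subgroup U) : Set U)
            * ((H.subgroupOf U ⊔ K.subgroupOf U : Subgroup U) : Set U) := by
          rw [mul_assoc, sup_comm (H.subgroupOf U), Subgroup.normal_mul]
  · intro x hx
    have hx' : (x : G) ∈ H ⊓ K :=
      ⟨Subgroup.mem_subgroupOf.mp (Subgroup.mem_inf.mp hx).1,
       Subgroup.mem_subgroupOf.mp (Subgroup.mem_inf.mp hx).2⟩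
    have h2 : (x : G) ∈ (tauCore U (H.subgroupOf U)).map U.subtype :=
      aux_tauCore_le hHU (hcore hx')
    obtain ⟨y, hy, hyx⟩ := h2
    have hxy : y = x := Subtype.ext hyx
    exact hxy ▸ hy
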